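/- Let V be a finite-dimensional complex vector space and x, y ∈ End(V) operators whose commutator x∘y − y∘x has rank at most one. Then for every element a of the unital ℂ-subalgebra of End(V) generated by x and y (equivalently, for every noncommutative polynomial a = p(x,y)), one has Tr(a ∘ (x∘y − y∘x)) = 0. -/

import Mathlib

open LinearMap Submodule Module

namespace TracePolyAux

universe u

variable {V : Type u} [AddCommGroup V] [Module ℂ V] [FiniteDimensional ℂ V]

section Restrict

variable {W : Submodule ℂ V}

lemma restrict_mul' {f g : Module.End ℂ V}
    (hf : ∀ v ∈ W, f v ∈ W) (hg : ∀ v ∈ W, g v ∈ W) (hfg : ∀ v ∈ W, (f * g) v ∈ W) :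
    (f * g).restrict hfg = f.restrict hf * g.restrict hg := by
  ext v
  simp [LinearMap.restrict_apply, Module.End.mul_apply]

lemma restrict_sub' {f g : Module.End ℂ V}
    (hf : ∀ v ∈ W, f v ∈ W) (hg : ∀ v ∈ W, g v ∈ W) (hfg : ∀ v ∈ W, (f - g) v ∈ W) :
    (f - g).restrict hfg = f.restrict hf - g.restrict hg := by
  ext v
  simp [LinearMap.restrict_apply]

lemma restrict_add' {f g : Module.End ℂ V}
    (hf : ∀ v ∈ W, f v ∈ W) (hg : ∀ v ∈ W, g v ∈ W) (hfg : ∀ v ∈ W, (f + g) v ∈ W) :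
    (f + g).restrict hfg = f.restrict hf + g.restrict hg := by
  ext v
  simp [LinearMap.restrict_apply]

lemma restrict_algebraMap' (r : ℂ)
    (h : ∀ v ∈ W, (algebraMap ℂ (Module.End ℂ V) r) v ∈ W) :
    (algebraMap ℂ (Module.End ℂ V) r).restrict h = algebraMap ℂ (Module.End ℂ W) r := by
  ext v
  simp [LinearMap.restrict_apply, Module.algebraMap_end_apply]

lemma mapQ_mul' {f g : Module.End ℂ V}
    (hf : ∀ v ∈ W, f v ∈ W) (hg : ∀ v ∈ W, g v ∈ W) (hfg : ∀ v ∈ W, (f * g) v ∈ W) :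
    W.mapQ W (f * g) (fun _ hv => hfg _ hv)
      = W.mapQ W f (fun _ hv => hf _ hv) * W.mapQ W g (fun _ hv => hg _ hv) := by
  apply Submodule.linearMap_qext
  ext v
  simp [Submodule.mapQ_apply, Module.End.mul_apply]

lemma mapQ_sub' {f g : Module.End ℂ V}
    (hf : ∀ v ∈ W, f v ∈ W) (hg : ∀ v ∈ W, g v ∈ W) (hfg : ∀ v ∈ W, (f - g) v ∈ W) :
    W.mapQ W (f - g) (fun _ hv => hfg _ hv)
      = W.mapQ W f (fun _ hv => hf _ hv) - W.mapQ W g (fun _ hv => hg _ hv) := by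
  apply Submodule.linearMap_qext
  ext v
  simp [Submodule.mapQ_apply]

lemma mapQ_add' {f g : Module.End ℂ V}
    (hf : ∀ v ∈ W, f v ∈ W) (hg : ∀ v ∈ W, g v ∈ W) (hfg : ∀ v ∈ W, (f + g) v ∈ W) :
    W.mapQ W (f + g) (fun _ hv => hfg _ hv)
      = W.mapQ W f (fun _ hv => hf _ hv) + W.mapQ W g (fun _ hv => hg _ hv) := by
  apply Submodule.linearMap_qext
  ext v
  simp [Submodule.mapQ_apply]

lemma mapQ_algebraMap' (r : ℂ)
    (h : ∀ v ∈ W, (algebraMap ℂ (Module.End ℂ V) r) v ∈ W) :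
    W.mapQ W (algebraMap ℂ (Module.End ℂ V) r) (fun _ hv => h _ hv)
      = algebraMap ℂ (Module.End ℂ (V ⧸ W)) r := by
  apply Submodule.linearMap_qext
  ext v
  simp [Submodule.mapQ_apply, Module.algebraMap_end_apply]

end Restrict

/-- Trace splits over an invariant subspace. -/
lemma trace_split (W : Submodule ℂ V) (f : Module.End ℂ V) (hf : ∀ v ∈ W, f v ∈ W) :
    LinearMap.trace ℂ V f
      = LinearMap.trace ℂ W (f.restrict hf)
        + LinearMap.trace ℂ (V ⧸ W) (W.mapQ W f (fun _ hv => hf _ hv)) := by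
  obtain ⟨q, hq⟩ := W.exists_isCompl
  set πW : V →ₗ[ℂ] W := Submodule.linearProjOfIsCompl W q hq with hπW
  set πq : V →ₗ[ℂ] q := Submodule.linearProjOfIsCompl q W hq.symm with hπq
  have hdec : f = W.subtype ∘ₗ (πW ∘ₗ f) + q.subtype ∘ₗ (πq ∘ₗ f) := by
    ext v
    exact (Submodule.projection_add_projection_eq_self hq (f v)).symm
  have h1 : LinearMap.trace ℂ V (W.subtype ∘ₗ (πW ∘ₗ f))
      = LinearMap.trace ℂ W (f.restrict hf) := by
    rw [LinearMap.trace_comp_comm']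
    congr 1
    ext u
    have h2 : f u ∈ W := hf u u.2
    have h5 := Submodule.linearProjOfIsCompl_apply_left hq ⟨f u, h2⟩
    exact congrArg Subtype.val h5
  have hker : ∀ v ∈ W, (πq ∘ₗ f) v = 0 := fun v hv =>
    Submodule.projectionOnto_apply_of_mem_right hq.symm (hf v hv)
  set g : (V ⧸ W) →ₗ[ℂ] q := W.liftQ (πq ∘ₗ f)
    (fun v hv => LinearMap.mem_ker.2 (hker v hv)) with hg
  have h3 : LinearMap.trace ℂ V (q.subtype ∘ₗ (πq ∘ₗ f))
      = LinearMap.trace ℂ (V ⧸ W) (W.mapQ W f (fun _ hv => hf _ hv)) := by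
    have hfq : q.subtype ∘ₗ (πq ∘ₗ f) = (q.subtype ∘ₗ g) ∘ₗ W.mkQ := by
      ext v
      simp [hg, Submodule.liftQ_apply]
    rw [hfq, LinearMap.trace_comp_comm']
    congr 1
    apply Submodule.linearMap_qext
    ext v
    have hmem : f v - (πq (f v) : V) ∈ W := by
      have h4 : f v - (πq (f v) : V) = (πW (f v) : V) :=
        sub_eq_iff_eq_add.2
          (Submodule.projection_add_projection_eq_self hq (f v)).symm
      rw [h4]; exact (πW (f v)).2
    simp only [LinearMap.comp_apply, Submodule.mkQ_apply, Submodule.mapQ_apply, hg,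
      Submodule.liftQ_apply]
    rw [Submodule.Quotient.eq]
    simpa using (neg_mem hmem : -(f v - (πq (f v) : V)) ∈ W)
  calc LinearMap.trace ℂ V f
      = LinearMap.trace ℂ V (W.subtype ∘ₗ (πW ∘ₗ f) + q.subtype ∘ₗ (πq ∘ₗ f)) := by
        rw [← hdec]
    _ = LinearMap.trace ℂ V (W.subtype ∘ₗ (πW ∘ₗ f))
          + LinearMap.trace ℂ V (q.subtype ∘ₗ (πq ∘ₗ f)) := map_add _ _ _
    _ = _ := by rw [h1, h3]

/-- Elements of the adjoin preserve an invariant subspace, and restrict / descend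
into the corresponding adjoins. -/
lemma adjoin_restrict_mapQ (x y : Module.End ℂ V) (W : Submodule ℂ V)
    (hx : ∀ v ∈ W, x v ∈ W) (hy : ∀ v ∈ W, y v ∈ W) {a : Module.End ℂ V}
    (ha : a ∈ Algebra.adjoin ℂ {x, y}) :
    ∃ h : ∀ v ∈ W, a v ∈ W,
      a.restrict h ∈ Algebra.adjoin ℂ {x.restrict hx, y.restrict hy} ∧
      W.mapQ W a (fun _ hv => h _ hv) ∈ Algebra.adjoin ℂ
        {W.mapQ W x (fun _ hv => hx _ hv), W.mapQ W y (fun _ hv => hy _ hv)} := by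
  induction ha using Algebra.adjoin_induction with
  | mem z hz =>
    rcases hz with rfl | hz
    · exact ⟨hx, Algebra.subset_adjoin (Set.mem_insert _ _),
        Algebra.subset_adjoin (Set.mem_insert _ _)⟩
    · rcases hz with rfl
      exact ⟨hy, Algebra.subset_adjoin (Set.mem_insert_of_mem _ rfl),
        Algebra.subset_adjoin (Set.mem_insert_of_mem _ rfl)⟩
  | algebraMap r =>
    refine ⟨fun v hv => by
      simpa [Module.algebraMap_end_apply] using W.smul_mem r hv, ?_, ?_⟩
    · rw [restrict_algebraMap']
      exact Subalgebra.algebraMap_mem _ r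
    · rw [mapQ_algebraMap']
      exact Subalgebra.algebraMap_mem _ r
  | add a b ha hb iha ihb =>
    obtain ⟨h1, m1, q1⟩ := iha
    obtain ⟨h2, m2, q2⟩ := ihb
    refine ⟨fun v hv => by
      simpa using W.add_mem (h1 v hv) (h2 v hv), ?_, ?_⟩
    · rw [restrict_add' h1 h2]
      exact add_mem m1 m2
    · rw [mapQ_add' h1 h2]
      exact add_mem q1 q2
  | mul a b ha hb iha ihb =>
    obtain ⟨h1, m1, q1⟩ := iha
    obtain ⟨h2, m2, q2⟩ := ihb
    refine ⟨fun v hv => by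
      simpa [Module.End.mul_apply] using h1 _ (h2 v hv), ?_, ?_⟩
    · rw [restrict_mul' h1 h2]
      exact mul_mem m1 m2
    · rw [mapQ_mul' h1 h2]
      exact mul_mem q1 q2

lemma finrank_range_restrict_le (f : Module.End ℂ V) (W : Submodule ℂ V)
    (h : ∀ v ∈ W, f v ∈ W) :
    finrank ℂ (LinearMap.range (f.restrict h)) ≤ finrank ℂ (LinearMap.range f) := by
  rw [(Submodule.equivMapOfInjective W.subtype W.injective_subtype
    (LinearMap.range (f.restrict h))).finrank_eq]
  apply Submodule.finrank_mono
  rintro z hz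
  obtain ⟨w, hw, rfl⟩ := hz
  obtain ⟨u, rfl⟩ := hw
  exact ⟨u, by simp [LinearMap.restrict_apply]⟩

lemma finrank_range_mapQ_le (f : Module.End ℂ V) (W : Submodule ℂ V)
    (h : ∀ v ∈ W, f v ∈ W) :
    finrank ℂ (LinearMap.range (W.mapQ W f (fun _ hv => h _ hv)))
      ≤ finrank ℂ (LinearMap.range f) := by
  have key : LinearMap.range (W.mapQ W f (fun _ hv => h _ hv))
      = Submodule.map W.mkQ (LinearMap.range f) := by
    rw [← LinearMap.range_comp, ← Submodule.mapQ_mkQ W W f, LinearMap.range_comp,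
      Submodule.range_mkQ, Submodule.map_top]
  rw [key]
  exact Submodule.finrank_map_le _ _

/-- Existence of a nontrivial proper invariant subspace when the commutator is
nonzero of rank at most one. -/
lemma exists_invariant (x y : Module.End ℂ V)
    (hrk : finrank ℂ (LinearMap.range (x * y - y * x)) ≤ 1)
    (hc : x * y - y * x ≠ 0) :
    ∃ W : Submodule ℂ V, W ≠ ⊥ ∧ W ≠ ⊤ ∧ (∀ v ∈ W, x v ∈ W) ∧ (∀ v ∈ W, y v ∈ W) := by
  set c := x * y - y * x with hcdef
  have hV : Nontrivial V := by
    by_contra hV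
    rw [not_nontrivial_iff_subsingleton] at hV
    exact hc (LinearMap.ext fun v => Subsingleton.elim _ _)
  obtain ⟨μ, hμ⟩ := Module.End.exists_eigenvalue x
  obtain ⟨v0, hv0⟩ := hμ.exists_hasEigenvector
  set x' : Module.End ℂ V := x - algebraMap ℂ (Module.End ℂ V) μ with hx'
  have hx'v0 : x' v0 = 0 := by
    have := Module.End.mem_eigenspace_iff.1 hv0.1
    simp [hx', Module.algebraMap_end_apply, this]
  have hv0ne : v0 ≠ 0 := hv0.2
  have hcomm : x' * y - y * x' = c := by
    simp only [hx', sub_mul, mul_sub, Algebra.commutes μ y]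
    rw [hcdef]; abel
  have hxx' : x * x' = x' * x := by
    simp only [hx', mul_sub, sub_mul, Algebra.commutes μ x]
  by_cases hker : ∀ w, x' w = 0 → c w = 0
  · refine ⟨LinearMap.ker x', ?_, ?_, ?_, ?_⟩
    · exact Submodule.ne_bot_iff _ |>.2 ⟨v0, hx'v0, hv0ne⟩
    · intro htop
      rw [LinearMap.ker_eq_top] at htop
      apply hc
      rw [← hcomm, htop]
      simp
    · intro v hv
      rw [LinearMap.mem_ker] at hv ⊢
      have : x' (x v) = x (x' v) := by
        have := congrArg (fun f => f v) hxx'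
        simpa [Module.End.mul_apply] using this.symm
      rw [this, hv, map_zero]
    · intro v hv
      rw [LinearMap.mem_ker] at hv ⊢
      have hcv : c v = 0 := hker v hv
      have : x' (y v) - y (x' v) = c v := by
        have := congrArg (fun f => f v) hcomm
        simpa [Module.End.mul_apply] using this
      rw [hv, map_zero, sub_zero] at this
      rw [this, hcv]
  · push_neg at hker
    obtain ⟨w, hw1, hw2⟩ := hker
    have hwne : w ≠ 0 := fun h => hw2 (by rw [h, map_zero])
    have hcw_mem : c w ∈ LinearMap.range x' := by
      have : x' (y w) - y (x' w) = c w := by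
        have := congrArg (fun f => f w) hcomm
        simpa [Module.End.mul_apply] using this
      rw [hw1, map_zero, sub_zero] at this
      exact ⟨y w, this⟩
    have hrangec : LinearMap.range c ≤ LinearMap.range x' := by
      have hspan : (ℂ ∙ c w) = LinearMap.range c := by
        apply Submodule.eq_of_le_of_finrank_le
        · rw [Submodule.span_le, Set.singleton_subset_iff]
          exact ⟨w, rfl⟩
        · rw [finrank_span_singleton hw2]
          exact hrk
      rw [← hspan, Submodule.span_le, Set.singleton_subset_iff]
      exact hcw_mem
    refine ⟨LinearMap.range x', ?_, ?_, ?_, ?_⟩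
    · intro hbot
      rw [hbot] at hcw_mem
      exact hw2 (by simpa using hcw_mem)
    · intro htop
      have h1 := LinearMap.finrank_range_add_finrank_ker x'
      have hkerpos : 0 < finrank ℂ (LinearMap.ker x') := by
        rw [Module.finrank_pos_iff]
        exact ⟨⟨⟨w, hw1⟩, 0, fun h => hwne (congrArg Subtype.val h)⟩⟩
      rw [htop, finrank_top] at h1
      omega
    · rintro v ⟨u, rfl⟩
      have : x (x' u) = x' (x u) := by
        have := congrArg (fun f => f u) hxx'
        simpa [Module.End.mul_apply] using this
      rw [this]
      exact ⟨x u, rfl⟩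
    · rintro v ⟨u, rfl⟩
      have hc' : x' (y u) - y (x' u) = c u := by
        have := congrArg (fun f => f u) hcomm
        simpa [Module.End.mul_apply] using this
      have : y (x' u) = x' (y u) - c u := by rw [← hc']; abel
      rw [this]
      exact sub_mem ⟨y u, rfl⟩ (hrangec ⟨u, rfl⟩)

lemma aux (n : ℕ) :
    ∀ (V : Type u) [AddCommGroup V] [Module ℂ V] [FiniteDimensional ℂ V]
      (x y : Module.End ℂ V), finrank ℂ V ≤ n →
      finrank ℂ (LinearMap.range (x * y - y * x)) ≤ 1 →
      ∀ a ∈ Algebra.adjoin ℂ {x, y},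
        LinearMap.trace ℂ V (a * (x * y - y * x)) = 0 := by
  induction n with
  | zero =>
    intro V _ _ _ x y hn _ a _
    have hsub : Subsingleton V := by
      rw [← Module.finrank_zero_iff (R := ℂ)]
      omega
    have : a * (x * y - y * x) = 0 := LinearMap.ext fun v => Subsingleton.elim _ _
    rw [this, map_zero]
  | succ n IH =>
    intro V _ _ _ x y hn hrk a ha
    by_cases hc : x * y - y * x = 0
    · rw [hc, mul_zero, map_zero]
    · obtain ⟨W, hWbot, hWtop, hxW, hyW⟩ := exists_invariant x y hrk hc
      obtain ⟨haW, hmem, hqmem⟩ := adjoin_restrict_mapQ x y W hxW hyW ha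
      have hxyW : ∀ v ∈ W, (x * y) v ∈ W := fun v hv => by
        simpa [Module.End.mul_apply] using hxW _ (hyW _ hv)
      have hyxW : ∀ v ∈ W, (y * x) v ∈ W := fun v hv => by
        simpa [Module.End.mul_apply] using hyW _ (hxW _ hv)
      have hcW : ∀ v ∈ W, (x * y - y * x) v ∈ W := fun v hv => by
        simpa using W.sub_mem (hxyW v hv) (hyxW v hv)
      have hacW : ∀ v ∈ W, (a * (x * y - y * x)) v ∈ W := fun v hv => by
        simpa [Module.End.mul_apply] using haW _ (hcW v hv)
      -- finrank bounds
      have hWlt : finrank ℂ W < finrank ℂ V :=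
        Submodule.finrank_lt (lt_of_le_of_ne le_top hWtop).ne
      have hWn : finrank ℂ W ≤ n := by omega
      have hQn : finrank ℂ (V ⧸ W) ≤ n := by
        have h1 := Submodule.finrank_quotient_add_finrank W
        have hpos : 0 < finrank ℂ W := by
          rw [Module.finrank_pos_iff]
          obtain ⟨z, hz, hzne⟩ := (Submodule.ne_bot_iff W).1 hWbot
          exact ⟨⟨⟨z, hz⟩, 0, fun h => hzne (congrArg Subtype.val h)⟩⟩
        omega
      -- restricted data
      have hc_res : (x * y - y * x).restrict hcW
          = x.restrict hxW * y.restrict hyW - y.restrict hyW * x.restrict hxW := by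
        rw [restrict_sub' hxyW hyxW, restrict_mul' hxW hyW, restrict_mul' hyW hxW]
      have hc_q : W.mapQ W (x * y - y * x) (fun _ hv => hcW _ hv)
          = W.mapQ W x (fun _ hv => hxW _ hv) * W.mapQ W y (fun _ hv => hyW _ hv)
            - W.mapQ W y (fun _ hv => hyW _ hv) * W.mapQ W x (fun _ hv => hxW _ hv) := by
        rw [mapQ_sub' hxyW hyxW, mapQ_mul' hxW hyW, mapQ_mul' hyW hxW]
      have hrk_res : finrank ℂ (LinearMap.range
          (x.restrict hxW * y.restrict hyW - y.restrict hyW * x.restrict hxW)) ≤ 1 := by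
        rw [← hc_res]
        exact le_trans (finrank_range_restrict_le _ _ _) hrk
      have hrk_q : finrank ℂ (LinearMap.range
          (W.mapQ W x (fun _ hv => hxW _ hv) * W.mapQ W y (fun _ hv => hyW _ hv)
            - W.mapQ W y (fun _ hv => hyW _ hv) * W.mapQ W x (fun _ hv => hxW _ hv))) ≤ 1 := by
        rw [← hc_q]
        exact le_trans (finrank_range_mapQ_le _ _ _) hrk
      have t1 : LinearMap.trace ℂ W ((a * (x * y - y * x)).restrict hacW) = 0 := by
        rw [restrict_mul' haW hcW, hc_res]
        exact IH W _ _ hWn hrk_res _ hmem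
      have t2 : LinearMap.trace ℂ (V ⧸ W)
          (W.mapQ W (a * (x * y - y * x)) (fun _ hv => hacW _ hv)) = 0 := by
        rw [mapQ_mul' haW hcW, hc_q]
        exact IH (V ⧸ W) _ _ hQn hrk_q _ hqmem
      rw [trace_split W _ hacW, t1, t2, add_zero]

end TracePolyAux

/-- If the commutator of two endomorphisms `x, y` of a finite-dimensional complex vector
space has rank at most one, then `Tr(a ∘ (x∘y − y∘x)) = 0` for every element `a` of the
unital subalgebra of `End(V)` generated by `x` and `y` (i.e. every noncommutative
polynomial in `x` and `y`). -/
theorem trace_poly_mul_commutator_eq_zero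
    (V : Type*) [AddCommGroup V] [Module ℂ V] [FiniteDimensional ℂ V]
    (x y : Module.End ℂ V)
    (hrk : Module.finrank ℂ (LinearMap.range (x * y - y * x)) ≤ 1) :
    ∀ a ∈ Algebra.adjoin ℂ {x, y},
      LinearMap.trace ℂ V (a * (x * y - y * x)) = 0 := by
  intro a ha
  exact TracePolyAux.aux (Module.finrank ℂ V) V x y le_rfl hrk a ha
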